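/- Let m ≥ 1, let ε ∈ (0, 1], let δ ∈ (0, 1) be such that c = √(2 ln(1.25/δ)) satisfies c ≥ 3/2, and let Ψ be a set of pairs of multivariate Gaussian probability measures on ℝ^m. Suppose that every pair in Ψ has the form (N(μᵢ, Σ), N(μⱼ, Σ)) for some mean vectors μᵢ, μⱼ ∈ ℝ^m and a common symmetric positive definite covariance matrix Σ satisfying the Mahalanobis condition (μᵢ − μⱼ)ᵀ Σ⁻¹ (μᵢ − μⱼ) ≤ (ε/c)². Then releasing the query without noise satisfies (ε, δ)-distribution privacy with respect to Ψ: for every such pair and every measurable S ⊆ ℝ^m, N(μᵢ, Σ)(S) ≤ e^ε · N(μⱼ, Σ)(S) + δ. -/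

import Mathlib

open MeasureTheory ProbabilityTheory

/-- Convolution of two measures on `ℝ^m`: the law of `X + Z` with `X ∼ μ`, `Z ∼ ν` independent. -/
noncomputable def mconv {m : ℕ} (μ ν : Measure (Fin m → ℝ)) : Measure (Fin m → ℝ) :=
  (μ.prod ν).map (fun p => p.1 + p.2)

/-- The Euclidean (`L²`) norm on `ℝ^m`. -/
noncomputable def l2norm {m : ℕ} (x : Fin m → ℝ) : ℝ := Real.sqrt (∑ k, (x k) ^ 2)

/-- The standard Gaussian measure on `ℝ^m`: `m` i.i.d. standard normal coordinates. -/
noncomputable def stdGaussPi (m : ℕ) : Measure (Fin m → ℝ) :=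
  Measure.pi fun _ : Fin m => gaussianReal 0 1

/-- The multivariate Gaussian measure `N(μ, A Aᵀ)` on `ℝ^m`, defined as the law of
`μ + A·G` where `G` is a standard Gaussian vector. -/
noncomputable def gaussN {m : ℕ} (μ : Fin m → ℝ) (A : Matrix (Fin m) (Fin m) ℝ) :
    Measure (Fin m → ℝ) :=
  (stdGaussPi m).map (fun g => μ + A.mulVec g)

open scoped ENNReal NNReal Matrix
open MeasureTheory ProbabilityTheory

lemma lintegral_pi_prod : ∀ (n : ℕ) (μ : Fin n → Measure ℝ),
    (∀ i, IsProbabilityMeasure (μ i)) → ∀ (f : Fin n → ℝ → ℝ≥0∞), (∀ i, Measurable (f i)) →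
    ∫⁻ x, ∏ i, f i (x i) ∂(Measure.pi μ) = ∏ i, ∫⁻ y, f i y ∂(μ i) := by
  intro n
  induction n with
  | zero =>
    intro μ hμ f hf
    rw [Measure.pi_of_empty]
    simp
  | succ n ih =>
    intro μ hμ f hf
    haveI := hμ
    have hF : Measurable fun x : Fin (n+1) → ℝ => ∏ i, f i (x i) :=
      Finset.measurable_prod _ fun i _ => (hf i).comp (measurable_pi_apply i)
    have hmp := (measurePreserving_piFinSuccAbove μ 0).symm
    rw [← hmp.map_eq, lintegral_map hF (MeasurableEquiv.measurable _)]
    have hps : ∀ (x : ℝ) (y : Fin n → ℝ),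
        (MeasurableEquiv.piFinSuccAbove (fun _ : Fin (n+1) => ℝ) 0).symm (x, y)
          = Fin.cons x y := by
      intro x y
      ext i
      simp [MeasurableEquiv.piFinSuccAbove, Fin.insertNthEquiv, Fin.insertNth_zero]
    calc ∫⁻ p, ∏ i, f i (((MeasurableEquiv.piFinSuccAbove (fun _ : Fin (n+1) => ℝ) 0).symm p) i)
          ∂((μ 0).prod (Measure.pi fun i => μ ((0 : Fin (n+1)).succAbove i)))
        = ∫⁻ p : ℝ × (Fin n → ℝ), f 0 p.1 * ∏ i : Fin n, f i.succ (p.2 i)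
          ∂((μ 0).prod (Measure.pi fun i => μ (i.succ))) := by
          simp_rw [Fin.succAbove_zero]
          congr 1
          ext p
          rw [hps p.1 p.2, Fin.prod_univ_succ]
          simp
      _ = (∫⁻ y, f 0 y ∂(μ 0)) * ∏ i : Fin n, ∫⁻ y, f i.succ y ∂(μ i.succ) := by
          rw [lintegral_prod_mul (f := f 0) (g := fun y : Fin n → ℝ => ∏ i : Fin n, f i.succ (y i))
            (hf 0).aemeasurable
            (Finset.measurable_prod _ fun i _ =>
              (hf i.succ).comp (measurable_pi_apply i)).aemeasurable]
          rw [ih (fun i => μ i.succ) (fun i => hμ i.succ) (fun i => f i.succ)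
            (fun i => hf i.succ)]
      _ = ∏ i, ∫⁻ y, f i y ∂(μ i) := by rw [Fin.prod_univ_succ]

lemma gaussian_withDensity_shift (a v : ℝ) :
    (gaussianReal a 1).withDensity
      (fun y => ENNReal.ofReal (Real.exp ((y - a) * v - v ^ 2 / 2))) = gaussianReal (a + v) 1 := by
  rw [gaussianReal_of_var_ne_zero a one_ne_zero,
    gaussianReal_of_var_ne_zero (a + v) one_ne_zero,
    ← withDensity_mul _ (measurable_gaussianPDF a 1)
      (by exact ENNReal.measurable_ofReal.comp (by fun_prop))]
  congr 1
  ext y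
  simp only [Pi.mul_apply, gaussianPDF, ← ENNReal.ofReal_mul (gaussianPDFReal_nonneg a 1 y)]
  congr 1
  simp only [gaussianPDFReal, NNReal.coe_one, mul_one, ← Real.exp_add]
  rw [mul_assoc]
  congr 1
  rw [← Real.exp_add]
  congr 1
  ring

lemma pi_gaussian_withDensity {m : ℕ} (a v : Fin m → ℝ) :
    (Measure.pi fun k => gaussianReal (a k) 1).withDensity
      (fun x => ENNReal.ofReal (Real.exp (∑ k, ((x k - a k) * v k - v k ^ 2 / 2))))
      = Measure.pi fun k => gaussianReal (a k + v k) 1 := by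
  symm
  apply Measure.pi_eq
  intro s hs
  set f : Fin m → ℝ → ℝ≥0∞ :=
    fun k y => ENNReal.ofReal (Real.exp ((y - a k) * v k - v k ^ 2 / 2)) with hf
  have hfm : ∀ k, Measurable (f k) := fun k =>
    ENNReal.measurable_ofReal.comp (by fun_prop)
  have hρ : (fun x : Fin m → ℝ =>
      ENNReal.ofReal (Real.exp (∑ k, ((x k - a k) * v k - v k ^ 2 / 2))))
      = fun x => ∏ k, f k (x k) := by
    ext x
    rw [Real.exp_sum, ENNReal.ofReal_prod_of_nonneg (fun k _ => (Real.exp_pos _).le)]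
  rw [hρ, withDensity_apply _ (MeasurableSet.univ_pi hs),
    ← lintegral_indicator (MeasurableSet.univ_pi hs)]
  have hind : (Set.univ.pi s).indicator (fun x => ∏ k, f k (x k))
      = fun x => ∏ k, (s k).indicator (f k) (x k) := by
    ext x
    by_cases hx : x ∈ Set.univ.pi s
    · rw [Set.indicator_of_mem hx]
      exact Finset.prod_congr rfl fun k _ =>
        (Set.indicator_of_mem (hx k (Set.mem_univ k)) _).symm
    · rw [Set.indicator_of_notMem hx]
      have hme : ∃ k, x k ∉ s k := by simpa [Set.mem_pi] using hx
      obtain ⟨k, hk⟩ := hme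
      exact (Finset.prod_eq_zero (Finset.mem_univ k)
        (by rw [Set.indicator_of_notMem hk])).symm
  rw [hind, lintegral_pi_prod m _ (fun k => by infer_instance) _
    (fun k => (hfm k).indicator (hs k))]
  refine Finset.prod_congr rfl fun k _ => ?_
  rw [lintegral_indicator (hs k), ← withDensity_apply _ (hs k),
    gaussian_withDensity_shift (a k) (v k)]

noncomputable def stdGaussPi' (m : ℕ) : Measure (Fin m → ℝ) :=
  Measure.pi fun _ : Fin m => gaussianReal 0 1

lemma stdGauss_map_add {m : ℕ} (u : Fin m → ℝ) :
    (stdGaussPi' m).map (fun x => x + u) = Measure.pi fun k => gaussianReal (u k) 1 := by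
  have hmp := measurePreserving_pi (fun _ : Fin m => gaussianReal 0 1)
    (fun k => gaussianReal (u k) 1) (f := fun k y => y + u k) (fun k =>
      ⟨measurable_add_const _, by
        have := gaussianReal_map_add_const (μ := 0) (v := 1) (u k)
        simpa using this⟩)
  have h2 : (fun (x : Fin m → ℝ) (i : Fin m) => x i + u i) = fun x => x + u := rfl
  rw [stdGaussPi', ← h2]
  exact hmp.map_eq

lemma stdGauss_map_neg {m : ℕ} :
    (stdGaussPi' m).map (fun x => -x) = stdGaussPi' m := by
  have hmp := measurePreserving_pi (fun _ : Fin m => gaussianReal 0 1)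
    (fun _ : Fin m => gaussianReal 0 1) (f := fun _ y => -y) (fun k =>
      ⟨measurable_neg, by
        have h := gaussianReal_map_const_mul (μ := 0) (v := 1) (-1 : ℝ)
        have he : (fun y : ℝ => -y) = ((-1 : ℝ) * ·) := by funext y; ring
        rw [he, h]
        congr 1
        · norm_num
        · ext; norm_num⟩)
  have h2 : (fun (x : Fin m → ℝ) (i : Fin m) => -(x i)) = fun x => -x := rfl
  rw [stdGaussPi', ← h2]
  exact hmp.map_eq

instance stdGaussPi'_prob (m : ℕ) : IsProbabilityMeasure (stdGaussPi' m) := by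
  rw [stdGaussPi']; infer_instance

lemma core_shift {m : ℕ} (w : Fin m → ℝ) (hw : 0 < ∑ k, w k ^ 2) (ε δ : ℝ)
    (ht : 0 < ε - (∑ k, w k ^ 2) / 2)
    (hδ : Real.exp (-(ε - (∑ k, w k ^ 2) / 2) ^ 2 / (2 * ∑ k, w k ^ 2)) / 2 ≤ δ)
    (T : Set (Fin m → ℝ)) (hT : MeasurableSet T) :
    ((stdGaussPi' m).map (fun x => x + w)) T
      ≤ ENNReal.ofReal (Real.exp ε) * stdGaussPi' m T + ENNReal.ofReal δ := by
  set γ := stdGaussPi' m with hγ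
  set S : ℝ := ∑ k, w k ^ 2 with hSdef
  set t : ℝ := ε - S / 2 with htdef
  set τ : ℝ := t / S with hτdef
  have hτpos : 0 < τ := div_pos ht hw
  set X : (Fin m → ℝ) → ℝ := fun x => ∑ k, x k * w k with hXdef
  have hXm : Measurable X := by
    apply Finset.measurable_sum
    intro k _
    exact (measurable_pi_apply k).mul_const _
  -- density representation of the shifted measure
  have hW := pi_gaussian_withDensity (m := m) 0 w
  simp only [Pi.zero_apply, sub_zero, zero_add] at hW
  have hν : γ.map (fun x => x + w)
      = γ.withDensity (fun x => ENNReal.ofReal (Real.exp (∑ k, (x k * w k - w k ^ 2 / 2)))) := by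
    rw [stdGauss_map_add w, hγ, stdGaussPi', ← hW]
  have hexp : ∀ x : Fin m → ℝ, (∑ k, (x k * w k - w k ^ 2 / 2)) = X x - S / 2 := by
    intro x
    rw [Finset.sum_sub_distrib, ← Finset.sum_div]
  -- the bad set
  set B : Set (Fin m → ℝ) := {x | ε + S / 2 < X x} with hBdef
  have hB : MeasurableSet B := measurableSet_lt measurable_const hXm
  set ρ : (Fin m → ℝ) → ℝ≥0∞ :=
    fun x => ENNReal.ofReal (Real.exp (∑ k, (x k * w k - w k ^ 2 / 2))) with hρdef
  have hρm : Measurable ρ := by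
    apply ENNReal.measurable_ofReal.comp
    apply Real.measurable_exp.comp
    apply Finset.measurable_sum
    intro k _
    exact ((measurable_pi_apply k).mul_const _).sub_const _
  -- tail bound : γ {x | t < X x} ≤ δ
  have htail : γ {x | t < X x} ≤ ENNReal.ofReal δ := by
    have hU : MeasurableSet {x : Fin m → ℝ | t < X x} := measurableSet_lt measurable_const hXm
    -- γ as density against the τ-shifted gaussian
    have hW2 := pi_gaussian_withDensity (m := m) (fun k => τ * w k) (fun k => -(τ * w k))
    simp only [add_neg_cancel] at hW2
    have hexp2 : ∀ x : Fin m → ℝ,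
        (∑ k, ((x k - τ * w k) * -(τ * w k) - (-(τ * w k)) ^ 2 / 2))
          = -τ * X x + τ ^ 2 * S / 2 := by
      intro x
      rw [Finset.sum_congr rfl (fun k _ => show
        (x k - τ * w k) * -(τ * w k) - (-(τ * w k)) ^ 2 / 2
          = -τ * (x k * w k) + τ ^ 2 / 2 * w k ^ 2 by ring)]
      rw [Finset.sum_add_distrib, ← Finset.mul_sum, ← Finset.mul_sum]
      simp only [hXdef, hSdef]
      ring
    have hγd : γ = (Measure.pi fun k => gaussianReal (τ * w k) 1).withDensity
        (fun x => ENNReal.ofReal (Real.exp (-τ * X x + τ ^ 2 * S / 2))) := by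
      rw [hγ, stdGaussPi', ← hW2]
      congr 1
      funext x
      rw [hexp2 x]
    have hshift2 : (Measure.pi fun k => gaussianReal (τ * w k) 1) {x | t < X x}
        = γ {x | 0 < X x} := by
      rw [← stdGauss_map_add (fun k => τ * w k),
        Measure.map_apply (measurable_add_const _) hU]
      congr 1
      ext x
      simp only [Set.mem_preimage, Set.mem_setOf_eq, hXdef, Pi.add_apply]
      have heq : (∑ k, (x k + τ * w k) * w k) = (∑ k, x k * w k) + τ * S := by
        rw [Finset.sum_congr rfl (fun k _ => show (x k + τ * w k) * w k
          = x k * w k + τ * (w k ^ 2) by ring), Finset.sum_add_distrib, ← Finset.mul_sum]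
      rw [heq]
      have hτS : τ * S = t := by
        rw [hτdef]; field_simp
      rw [hτS]
      constructor <;> intro h <;> linarith
    have hhalf : γ {x | 0 < X x} ≤ 2⁻¹ := by
      have hneg : γ {x | 0 < X x} = γ {x | X x < 0} := by
        conv_lhs => rw [hγ, ← stdGauss_map_neg (m := m)]
        rw [Measure.map_apply measurable_neg (measurableSet_lt measurable_const hXm)]
        congr 1
        ext x
        simp only [Set.mem_preimage, Set.mem_setOf_eq, hXdef]
        rw [show (∑ k, (-x) k * w k) = -∑ k, x k * w k by
          rw [← Finset.sum_neg_distrib]; exact Finset.sum_congr rfl fun k _ => by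
            simp [neg_mul]]
        constructor <;> intro h <;> linarith
      have hdisj : Disjoint {x : Fin m → ℝ | 0 < X x} {x | X x < 0} := by
        apply Set.disjoint_left.mpr
        intro x hx hx'
        simp only [Set.mem_setOf_eq] at hx hx'
        exact absurd (lt_trans hx' hx) (lt_irrefl _)
      haveI : IsProbabilityMeasure γ := by rw [hγ]; infer_instance
      have hsum : γ {x | 0 < X x} + γ {x | X x < 0} ≤ 1 := by
        rw [← measure_union hdisj (measurableSet_lt hXm measurable_const)]
        exact le_trans (measure_mono (Set.subset_univ _)) (le_of_eq measure_univ)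
      rw [← hneg] at hsum
      rw [ENNReal.le_inv_iff_mul_le, mul_comm, two_mul]
      exact hsum
    -- put together
    rw [hγd, withDensity_apply _ hU]
    calc ∫⁻ x in {x | t < X x}, ENNReal.ofReal (Real.exp (-τ * X x + τ ^ 2 * S / 2))
          ∂(Measure.pi fun k => gaussianReal (τ * w k) 1)
        ≤ ∫⁻ _ in {x | t < X x}, ENNReal.ofReal (Real.exp (-τ * t + τ ^ 2 * S / 2))
          ∂(Measure.pi fun k => gaussianReal (τ * w k) 1) := by
          apply setLIntegral_mono measurable_const
          intro x hx
          simp only [Set.mem_setOf_eq] at hx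
          apply ENNReal.ofReal_le_ofReal
          apply Real.exp_le_exp.mpr
          have hmono : -τ * X x ≤ -τ * t := by nlinarith
          linarith
      _ = ENNReal.ofReal (Real.exp (-τ * t + τ ^ 2 * S / 2))
          * (Measure.pi fun k => gaussianReal (τ * w k) 1) {x | t < X x} := by
          rw [setLIntegral_const]
      _ ≤ ENNReal.ofReal (Real.exp (-t ^ 2 / (2 * S))) * 2⁻¹ := by
          apply mul_le_mul'
          · apply ENNReal.ofReal_le_ofReal
            apply Real.exp_le_exp.mpr
            have : -τ * t + τ ^ 2 * S / 2 = -t ^ 2 / (2 * S) := by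
              rw [hτdef]; field_simp; ring
            linarith [le_of_eq this]
          · rw [hshift2]; exact hhalf
      _ ≤ ENNReal.ofReal δ := by
          rw [← ENNReal.ofReal_ofNat 2, ← ENNReal.ofReal_inv_of_pos (by norm_num : (0:ℝ) < 2),
            ← ENNReal.ofReal_mul (Real.exp_nonneg _)]
          apply ENNReal.ofReal_le_ofReal
          calc Real.exp (-t ^ 2 / (2 * S)) * (2:ℝ)⁻¹
              = Real.exp (-t ^ 2 / (2 * S)) / 2 := by ring
            _ ≤ δ := hδ
  -- main split
  rw [hν, withDensity_apply _ hT, ← hρdef]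
  have hsub : T ⊆ (T ∩ Bᶜ) ∪ B := by
    intro x hx
    by_cases hxB : x ∈ B
    · exact Or.inr hxB
    · exact Or.inl ⟨hx, hxB⟩
  calc ∫⁻ x in T, ρ x ∂γ
      ≤ ∫⁻ x in (T ∩ Bᶜ) ∪ B, ρ x ∂γ := lintegral_mono_set hsub
    _ ≤ ∫⁻ x in T ∩ Bᶜ, ρ x ∂γ + ∫⁻ x in B, ρ x ∂γ := lintegral_union_le _ _ _
    _ ≤ ENNReal.ofReal (Real.exp ε) * γ T + ENNReal.ofReal δ := by
        apply add_le_add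
        · calc ∫⁻ x in T ∩ Bᶜ, ρ x ∂γ
              ≤ ∫⁻ _ in T ∩ Bᶜ, ENNReal.ofReal (Real.exp ε) ∂γ := by
                apply setLIntegral_mono measurable_const
                intro x hx
                have hxB := hx.2
                simp only [Set.mem_compl_iff, hBdef, Set.mem_setOf_eq] at hxB
                rw [hρdef]
                apply ENNReal.ofReal_le_ofReal
                apply Real.exp_le_exp.mpr
                rw [hexp x]
                push_neg at hxB
                linarith
            _ = ENNReal.ofReal (Real.exp ε) * γ (T ∩ Bᶜ) := setLIntegral_const _ _
            _ ≤ ENNReal.ofReal (Real.exp ε) * γ T :=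
                mul_le_mul_right (measure_mono Set.inter_subset_left) _
        · calc ∫⁻ x in B, ρ x ∂γ
              = (γ.withDensity ρ) B := (withDensity_apply _ hB).symm
            _ = (γ.map (fun x => x + w)) B := by rw [hν]
            _ = γ ((fun x => x + w) ⁻¹' B) := Measure.map_apply (measurable_add_const _) hB
            _ = γ {x | t < X x} := by
                congr 1
                ext x
                simp only [Set.mem_preimage, hBdef, Set.mem_setOf_eq, hXdef, Pi.add_apply]
                have heq2 : (∑ k, (x k + w k) * w k) = (∑ k, x k * w k) + S := by
                  rw [Finset.sum_congr rfl (fun k _ => show (x k + w k) * w k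
                    = x k * w k + w k ^ 2 by ring), Finset.sum_add_distrib]
                rw [heq2]
                simp only [htdef]
                constructor <;> intro h <;> linarith
            _ ≤ ENNReal.ofReal δ := htail

set_option maxHeartbeats 1000000 in
lemma numeric_bound (ε δ c S : ℝ) (hε0 : 0 < ε) (hε1 : ε ≤ 1) (hδ0 : 0 < δ)
    (hc : c = Real.sqrt (2 * Real.log (1.25 / δ))) (hc32 : 3 / 2 ≤ c)
    (hS0 : 0 < S) (hSle : S ≤ (ε / c) ^ 2) :
    0 < ε - S / 2 ∧ Real.exp (-(ε - S / 2) ^ 2 / (2 * S)) / 2 ≤ δ := by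
  have hc0 : (0 : ℝ) < c := lt_of_lt_of_le (by norm_num) hc32
  have hz : 0 ≤ 2 * Real.log (1.25 / δ) := by
    by_contra hlt
    push_neg at hlt
    have : c = 0 := by rw [hc, Real.sqrt_eq_zero_of_nonpos hlt.le]
    linarith
  have hc2 : c ^ 2 = 2 * Real.log (1.25 / δ) := by
    rw [hc, Real.sq_sqrt hz]
  have hδeq : δ = 1.25 * Real.exp (-c ^ 2 / 2) := by
    have hlog : Real.log (1.25 / δ) = c ^ 2 / 2 := by linarith
    have h125 : (0 : ℝ) < 1.25 / δ := by positivity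
    have h2 : Real.exp (c ^ 2 / 2) = 1.25 / δ := by
      rw [← hlog]; exact Real.exp_log h125
    have h2' : Real.exp (c ^ 2 / 2) * δ = 1.25 := by
      rw [h2]; field_simp
    have h3 : Real.exp (c ^ 2 / 2) * Real.exp (-c ^ 2 / 2) = 1 := by
      rw [← Real.exp_add, show c ^ 2 / 2 + -c ^ 2 / 2 = 0 by ring, Real.exp_zero]
    calc δ = δ * (Real.exp (c ^ 2 / 2) * Real.exp (-c ^ 2 / 2)) := by rw [h3, mul_one]
      _ = (Real.exp (c ^ 2 / 2) * δ) * Real.exp (-c ^ 2 / 2) := by ring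
      _ = 1.25 * Real.exp (-c ^ 2 / 2) := by rw [h2']
  set t : ℝ := ε - S / 2 with htdef
  have hεc : 0 ≤ ε / c := by positivity
  set s : ℝ := Real.sqrt S with hsdef
  have hsS : s ^ 2 = S := Real.sq_sqrt hS0.le
  have hs0 : 0 < s := Real.sqrt_pos.mpr hS0
  have hsle : s ≤ ε / c := by
    rw [hsdef, show (ε / c) = Real.sqrt ((ε / c) ^ 2) by rw [Real.sqrt_sq hεc]]
    exact Real.sqrt_le_sqrt hSle
  have hscε : c * s ≤ ε := by
    have := mul_le_mul_of_nonneg_left hsle hc0.le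
    rwa [mul_div_cancel₀ _ hc0.ne'] at this
  have hcc : (1 : ℝ) ≤ c ^ 2 := by nlinarith
  have ht0 : 0 < t := by
    have hS1 : S ≤ ε ^ 2 / c ^ 2 := by rw [div_pow] at hSle; exact hSle
    have hε2 : ε ^ 2 ≤ ε := by nlinarith
    have hSε : S ≤ ε := by
      calc S ≤ ε ^ 2 / c ^ 2 := hS1
        _ ≤ ε ^ 2 := div_le_self (by positivity) hcc
        _ ≤ ε := hε2
    rw [htdef]; linarith
  have hcε2 : c * (ε / (2 * c)) = ε / 2 := by field_simp
  have hkey : (c - ε / (2 * c)) * s ≤ t := by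
    have h1 : s ^ 2 ≤ s * (ε / c) := by nlinarith
    have h2 : t = ε - s ^ 2 / 2 := by rw [htdef, hsS]
    have h4 : (ε / (2 * c)) * s = (s * (ε / c)) / 2 := by field_simp
    nlinarith
  have hq0 : (0 : ℝ) < c - ε / (2 * c) := by
    have : ε / (2 * c) < c := by
      rw [div_lt_iff₀ (by positivity)]
      nlinarith
    linarith
  have hq2 : c ^ 2 - 1 ≤ (c - ε / (2 * c)) ^ 2 := by
    nlinarith [sq_nonneg (ε / (2 * c))]
  have hqs : 0 ≤ (c - ε / (2 * c)) * s := mul_nonneg hq0.le hs0.le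
  have ht2 : (c ^ 2 - 1) * S ≤ t ^ 2 := by
    calc (c ^ 2 - 1) * S = (c ^ 2 - 1) * s ^ 2 := by rw [hsS]
      _ ≤ (c - ε / (2 * c)) ^ 2 * s ^ 2 :=
          mul_le_mul_of_nonneg_right hq2 (sq_nonneg s)
      _ = ((c - ε / (2 * c)) * s) ^ 2 := by ring
      _ ≤ t ^ 2 := pow_le_pow_left₀ hqs hkey 2
  have hexpo : -t ^ 2 / (2 * S) ≤ -(c ^ 2 - 1) / 2 := by
    rw [div_le_div_iff₀ (by positivity) (by norm_num : (0:ℝ) < 2)]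
    nlinarith
  have h11 : Real.exp (1 / 2) * Real.exp (1 / 2) = Real.exp 1 := by
    rw [← Real.exp_add]; norm_num
  have hexph : Real.exp (1 / 2 : ℝ) ≤ 2.5 := by
    nlinarith [Real.exp_one_lt_d9, Real.exp_pos (1 / 2 : ℝ)]
  refine ⟨ht0, ?_⟩
  calc Real.exp (-t ^ 2 / (2 * S)) / 2
      ≤ Real.exp (-(c ^ 2 - 1) / 2) / 2 := by
        have := Real.exp_le_exp.mpr hexpo
        linarith
    _ = Real.exp (-c ^ 2 / 2) * Real.exp (1 / 2) / 2 := by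
        rw [← Real.exp_add, show -c ^ 2 / 2 + 1 / 2 = -(c ^ 2 - 1) / 2 by ring]
    _ ≤ Real.exp (-c ^ 2 / 2) * 2.5 / 2 := by
        have h := Real.exp_pos (-c ^ 2 / 2)
        nlinarith
    _ = 1.25 * Real.exp (-c ^ 2 / 2) := by ring
    _ = δ := hδeq.symm

/-- **Release without noise under adversarial uncertainty** (Theorem 4.4): if every
pair in `Ψ` is of the form `(N(μᵢ, Σ), N(μⱼ, Σ))` with common positive definite
covariance `Σ` and `(μᵢ − μⱼ)ᵀ Σ⁻¹ (μᵢ − μⱼ) ≤ (ε/c)²`, where `c = √(2 ln(1.25/δ))`,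
then the identity mechanism satisfies `(ε, δ)`-distribution privacy w.r.t. `Ψ`. -/
theorem gaussian_no_noise_release
    (m : ℕ) (hm : 1 ≤ m)
    (ε δ c : ℝ) (hε : 0 < ε ∧ ε ≤ 1) (hδ : 0 < δ ∧ δ < 1)
    (hc : c = Real.sqrt (2 * Real.log (1.25 / δ))) (hc32 : 3 / 2 ≤ c)
    (Ψ : Set (Measure (Fin m → ℝ) × Measure (Fin m → ℝ)))
    (hΨ : ∀ p ∈ Ψ, ∃ (μi μj : Fin m → ℝ) (Sig A : Matrix (Fin m) (Fin m) ℝ),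
      Sig.PosDef ∧ A * A.transpose = Sig ∧
      dotProduct (μi - μj) (Sig⁻¹.mulVec (μi - μj)) ≤ (ε / c) ^ 2 ∧
      p.1 = gaussN μi A ∧ p.2 = gaussN μj A) :
    ∀ p ∈ Ψ, ∀ S : Set (Fin m → ℝ), MeasurableSet S →
      p.1 S ≤ ENNReal.ofReal (Real.exp ε) * p.2 S + ENNReal.ofReal δ := by
  intro p hp S hS
  obtain ⟨μi, μj, Sig, A, hpos, hAA, hmaha, hp1, hp2⟩ := hΨ p hp
  have hdet : IsUnit A.det := by
    have h1 : 0 < Sig.det := hpos.det_pos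
    rw [← hAA, Matrix.det_mul, Matrix.det_transpose] at h1
    have hne : A.det ≠ 0 := by
      intro h; rw [h] at h1; simp at h1
    exact isUnit_iff_ne_zero.mpr hne
  set w : Fin m → ℝ := A⁻¹.mulVec (μi - μj) with hwdef
  have hAw : A.mulVec w = μi - μj := by
    rw [hwdef, Matrix.mulVec_mulVec, Matrix.mul_nonsing_inv A hdet, Matrix.one_mulVec]
  have hwS : (∑ k, w k ^ 2) = dotProduct (μi - μj) (Sig⁻¹.mulVec (μi - μj)) := by
    have h1 : Sig⁻¹ = (A⁻¹)ᵀ * A⁻¹ := by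
      rw [← hAA, Matrix.mul_inv_rev, Matrix.transpose_nonsing_inv]
    rw [h1, ← Matrix.mulVec_mulVec, Matrix.dotProduct_mulVec, Matrix.vecMul_transpose, ← hwdef]
    simp [dotProduct, sq]
  have hsum_le : (∑ k, w k ^ 2) ≤ (ε / c) ^ 2 := by rw [hwS]; exact hmaha
  have hmulVec : ∀ (B : Matrix (Fin m) (Fin m) ℝ),
      Measurable (fun g : Fin m → ℝ => B.mulVec g) := by
    intro B
    apply measurable_pi_iff.mpr
    intro k
    simp only [Matrix.mulVec, dotProduct]
    exact Finset.measurable_sum _ fun j _ => (measurable_pi_apply j).const_mul _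
  have hfim : Measurable (fun g : Fin m → ℝ => μi + A.mulVec g) :=
    measurable_const.add (hmulVec A)
  have hfjm : Measurable (fun g : Fin m → ℝ => μj + A.mulVec g) :=
    measurable_const.add (hmulVec A)
  set T : Set (Fin m → ℝ) := (fun g : Fin m → ℝ => μj + A.mulVec g) ⁻¹' S with hTdef
  have hT : MeasurableSet T := hfjm hS
  have hpre : (fun g : Fin m → ℝ => μi + A.mulVec g) ⁻¹' S = (fun g => g + w) ⁻¹' T := by
    ext g
    simp only [Set.mem_preimage, hTdef]
    have heq : μj + A.mulVec (g + w) = μi + A.mulVec g := by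
      rw [Matrix.mulVec_add, hAw]
      abel
    rw [heq]
  have hstd : stdGaussPi m = stdGaussPi' m := rfl
  rw [hp1, hp2]
  simp only [gaussN]
  rw [Measure.map_apply hfim hS, Measure.map_apply hfjm hS, hpre, ← hTdef,
    ← Measure.map_apply (measurable_add_const w) hT, hstd]
  have hnn : (0 : ℝ) ≤ ∑ k, w k ^ 2 := Finset.sum_nonneg fun k _ => sq_nonneg _
  rcases eq_or_lt_of_le hnn with h0 | hpos'
  · have hw0 : w = 0 := by
      funext k
      have hk := (Finset.sum_eq_zero_iff_of_nonneg
        (fun k _ => sq_nonneg (w k))).mp h0.symm k (Finset.mem_univ k)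
      exact pow_eq_zero_iff two_ne_zero |>.mp hk
    rw [hw0]
    have hid : (fun x : Fin m → ℝ => x + 0) = id := by funext x; simp
    rw [hid, Measure.map_id]
    calc (stdGaussPi' m) T = 1 * (stdGaussPi' m) T := (one_mul _).symm
      _ ≤ ENNReal.ofReal (Real.exp ε) * (stdGaussPi' m) T :=
          mul_le_mul_left (ENNReal.one_le_ofReal.mpr (Real.one_le_exp hε.1.le)) _
      _ ≤ ENNReal.ofReal (Real.exp ε) * (stdGaussPi' m) T + ENNReal.ofReal δ := le_self_add
  · obtain ⟨ht0, hδ2⟩ :=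
      numeric_bound ε δ c (∑ k, w k ^ 2) hε.1 hε.2 hδ.1 hc hc32 hpos' hsum_le
    exact core_shift w hpos' ε δ ht0 hδ2 T hT
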